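/- Let u₁,…,u₆ be nonzero complex numbers and let z be a nonzero complex number with A·z² + B·z + C = 0, and suppose 1 − z·m ≠ 0 for each of the eight monomials m ∈ {1, u₁u₂u₄u₅, u₁u₃u₄u₆, u₂u₃u₅u₆, u₁u₂u₃, u₁u₅u₆, u₂u₄u₆, u₃u₄u₅}. With S(z) and N(z) as below, ( N(z)·S(z) / (z²·u₁u₂u₃u₄u₅u₆) )² = B² − 4AC. -/

import Mathlib

/-- The coefficient `A` of the critical point equation of the 6j-symbol potential. -/
noncomputable def qA (u₁ u₂ u₃ u₄ u₅ u₆ : ℂ) : ℂ :=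
  u₁*u₄ + u₂*u₅ + u₃*u₆ - u₁*u₂*u₆ - u₁*u₃*u₅ - u₂*u₃*u₄ - u₄*u₅*u₆ + u₁*u₂*u₃*u₄*u₅*u₆

/-- The coefficient `B` of the critical point equation of the 6j-symbol potential. -/
noncomputable def qB (u₁ u₂ u₃ u₄ u₅ u₆ : ℂ) : ℂ :=
  -((u₁ - u₁⁻¹) * (u₄ - u₄⁻¹)) - (u₂ - u₂⁻¹) * (u₅ - u₅⁻¹) - (u₃ - u₃⁻¹) * (u₆ - u₆⁻¹)

/-- The coefficient `C` of the critical point equation of the 6j-symbol potential. -/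
noncomputable def qC (u₁ u₂ u₃ u₄ u₅ u₆ : ℂ) : ℂ :=
  (u₁*u₄)⁻¹ + (u₂*u₅)⁻¹ + (u₃*u₆)⁻¹ - (u₁*u₂*u₆)⁻¹ - (u₁*u₃*u₅)⁻¹ - (u₂*u₃*u₄)⁻¹
    - (u₄*u₅*u₆)⁻¹ + (u₁*u₂*u₃*u₄*u₅*u₆)⁻¹

/-- The numerator `M(z) = (1−z)(1−zu₁u₂u₄u₅)(1−zu₁u₃u₄u₆)(1−zu₂u₃u₅u₆)`. -/
noncomputable def qM (u₁ u₂ u₃ u₄ u₅ u₆ z : ℂ) : ℂ :=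
  (1 - z) * (1 - z*u₁*u₂*u₄*u₅) * (1 - z*u₁*u₃*u₄*u₆) * (1 - z*u₂*u₃*u₅*u₆)

/-- The denominator `N(z) = (1−zu₁u₂u₃)(1−zu₁u₅u₆)(1−zu₂u₄u₆)(1−zu₃u₄u₅)`. -/
noncomputable def qN (u₁ u₂ u₃ u₄ u₅ u₆ z : ℂ) : ℂ :=
  (1 - z*u₁*u₂*u₃) * (1 - z*u₁*u₅*u₆) * (1 - z*u₂*u₄*u₆) * (1 - z*u₃*u₄*u₅)

/-- The sum `S(z)` appearing in `∂²U/∂ξ²` at the critical point (up to the factor `−4`). -/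
noncomputable def qS (u₁ u₂ u₃ u₄ u₅ u₆ z : ℂ) : ℂ :=
  z / (1 - z) + z*u₁*u₂*u₄*u₅ / (1 - z*u₁*u₂*u₄*u₅) + z*u₁*u₃*u₄*u₆ / (1 - z*u₁*u₃*u₄*u₆)
    + z*u₂*u₃*u₅*u₆ / (1 - z*u₂*u₃*u₅*u₆)
    - z*u₁*u₂*u₃ / (1 - z*u₁*u₂*u₃) - z*u₁*u₅*u₆ / (1 - z*u₁*u₅*u₆)
    - z*u₂*u₄*u₆ / (1 - z*u₂*u₄*u₆) - z*u₃*u₄*u₅ / (1 - z*u₃*u₄*u₅)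


private lemma hUB_aux (u₁ u₂ u₃ u₄ u₅ u₆ : ℂ)
    (h₁ : u₁ ≠ 0) (h₂ : u₂ ≠ 0) (h₃ : u₃ ≠ 0) (h₄ : u₄ ≠ 0) (h₅ : u₅ ≠ 0) (h₆ : u₆ ≠ 0) :
    qB u₁ u₂ u₃ u₄ u₅ u₆ * (u₁*u₂*u₃*u₄*u₅*u₆) =
      -((u₁^2-1)*(u₄^2-1)*(u₂*u₃*u₅*u₆)) - (u₂^2-1)*(u₅^2-1)*(u₁*u₃*u₄*u₆)
        - (u₃^2-1)*(u₆^2-1)*(u₁*u₂*u₄*u₅) := by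
  have e1 : u₁⁻¹ * (u₁*u₂*u₃*u₄*u₅*u₆) = u₂*u₃*u₄*u₅*u₆ := by field_simp; try ring
  have e2 : u₂⁻¹ * (u₁*u₂*u₃*u₄*u₅*u₆) = u₁*u₃*u₄*u₅*u₆ := by field_simp; try ring
  have e3 : u₃⁻¹ * (u₁*u₂*u₃*u₄*u₅*u₆) = u₁*u₂*u₄*u₅*u₆ := by field_simp; try ring
  have e4 : u₄⁻¹ * (u₁*u₂*u₃*u₄*u₅*u₆) = u₁*u₂*u₃*u₅*u₆ := by field_simp; try ring
  have e5 : u₅⁻¹ * (u₁*u₂*u₃*u₄*u₅*u₆) = u₁*u₂*u₃*u₄*u₆ := by field_simp; try ring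
  have e6 : u₆⁻¹ * (u₁*u₂*u₃*u₄*u₅*u₆) = u₁*u₂*u₃*u₄*u₅ := by field_simp; try ring
  have f14 : u₁⁻¹ * u₄⁻¹ * (u₁*u₂*u₃*u₄*u₅*u₆) = u₂*u₃*u₅*u₆ := by field_simp; try ring
  have f25 : u₂⁻¹ * u₅⁻¹ * (u₁*u₂*u₃*u₄*u₅*u₆) = u₁*u₃*u₄*u₆ := by field_simp; try ring
  have f36 : u₃⁻¹ * u₆⁻¹ * (u₁*u₂*u₃*u₄*u₅*u₆) = u₁*u₂*u₄*u₅ := by field_simp; try ring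
  unfold qB
  linear_combination u₁*e4 + u₄*e1 - f14 + u₂*e5 + u₅*e2 - f25 + u₃*e6 + u₆*e3 - f36

private lemma hUC_aux (u₁ u₂ u₃ u₄ u₅ u₆ : ℂ)
    (h₁ : u₁ ≠ 0) (h₂ : u₂ ≠ 0) (h₃ : u₃ ≠ 0) (h₄ : u₄ ≠ 0) (h₅ : u₅ ≠ 0) (h₆ : u₆ ≠ 0) :
    qC u₁ u₂ u₃ u₄ u₅ u₆ * (u₁*u₂*u₃*u₄*u₅*u₆) =
      1 - u₁*u₂*u₃ - u₁*u₅*u₆ - u₂*u₄*u₆ - u₃*u₄*u₅ + u₁*u₂*u₄*u₅ + u₁*u₃*u₄*u₆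
        + u₂*u₃*u₅*u₆ := by
  have f14 : (u₁*u₄)⁻¹ * (u₁*u₂*u₃*u₄*u₅*u₆) = u₂*u₃*u₅*u₆ := by field_simp; try ring
  have f25 : (u₂*u₅)⁻¹ * (u₁*u₂*u₃*u₄*u₅*u₆) = u₁*u₃*u₄*u₆ := by field_simp; try ring
  have f36 : (u₃*u₆)⁻¹ * (u₁*u₂*u₃*u₄*u₅*u₆) = u₁*u₂*u₄*u₅ := by field_simp; try ring
  have g126 : (u₁*u₂*u₆)⁻¹ * (u₁*u₂*u₃*u₄*u₅*u₆) = u₃*u₄*u₅ := by field_simp; try ring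
  have g135 : (u₁*u₃*u₅)⁻¹ * (u₁*u₂*u₃*u₄*u₅*u₆) = u₂*u₄*u₆ := by field_simp; try ring
  have g234 : (u₂*u₃*u₄)⁻¹ * (u₁*u₂*u₃*u₄*u₅*u₆) = u₁*u₅*u₆ := by field_simp; try ring
  have g456 : (u₄*u₅*u₆)⁻¹ * (u₁*u₂*u₃*u₄*u₅*u₆) = u₁*u₂*u₃ := by field_simp; try ring
  have hfull : (u₁*u₂*u₃*u₄*u₅*u₆)⁻¹ * (u₁*u₂*u₃*u₄*u₅*u₆) = 1 :=
    inv_mul_cancel₀ (mul_ne_zero (mul_ne_zero (mul_ne_zero (mul_ne_zero (mul_ne_zero h₁ h₂) h₃) h₄) h₅) h₆)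
  unfold qC
  linear_combination f14 + f25 + f36 - g126 - g135 - g234 - g456 + hfull

set_option maxHeartbeats 1600000 in
theorem qN_mul_qS_sq (u₁ u₂ u₃ u₄ u₅ u₆ : ℂ)
    (h₁ : u₁ ≠ 0) (h₂ : u₂ ≠ 0) (h₃ : u₃ ≠ 0) (h₄ : u₄ ≠ 0) (h₅ : u₅ ≠ 0) (h₆ : u₆ ≠ 0)
    (z : ℂ) (hz : z ≠ 0)
    (hquad : qA u₁ u₂ u₃ u₄ u₅ u₆ * z ^ 2 + qB u₁ u₂ u₃ u₄ u₅ u₆ * z + qC u₁ u₂ u₃ u₄ u₅ u₆ = 0)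
    (hm1 : 1 - z * 1 ≠ 0) (hm2 : 1 - z*u₁*u₂*u₄*u₅ ≠ 0) (hm3 : 1 - z*u₁*u₃*u₄*u₆ ≠ 0)
    (hm4 : 1 - z*u₂*u₃*u₅*u₆ ≠ 0) (hm5 : 1 - z*u₁*u₂*u₃ ≠ 0) (hm6 : 1 - z*u₁*u₅*u₆ ≠ 0)
    (hm7 : 1 - z*u₂*u₄*u₆ ≠ 0) (hm8 : 1 - z*u₃*u₄*u₅ ≠ 0) :
    (qN u₁ u₂ u₃ u₄ u₅ u₆ z * qS u₁ u₂ u₃ u₄ u₅ u₆ z / (z ^ 2 * (u₁*u₂*u₃*u₄*u₅*u₆))) ^ 2 =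
      qB u₁ u₂ u₃ u₄ u₅ u₆ ^ 2 - 4 * qA u₁ u₂ u₃ u₄ u₅ u₆ * qC u₁ u₂ u₃ u₄ u₅ u₆ := by
  have hm1' : (1:ℂ) - z ≠ 0 := by simpa using hm1
  have hU : u₁*u₂*u₃*u₄*u₅*u₆ ≠ 0 :=
    mul_ne_zero (mul_ne_zero (mul_ne_zero (mul_ne_zero (mul_ne_zero h₁ h₂) h₃) h₄) h₅) h₆
  have hN0 : qN u₁ u₂ u₃ u₄ u₅ u₆ z ≠ 0 := by
    unfold qN; exact mul_ne_zero (mul_ne_zero (mul_ne_zero hm5 hm6) hm7) hm8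
  have hUB := hUB_aux u₁ u₂ u₃ u₄ u₅ u₆ h₁ h₂ h₃ h₄ h₅ h₆
  have hUC := hUC_aux u₁ u₂ u₃ u₄ u₅ u₆ h₁ h₂ h₃ h₄ h₅ h₆
  have key : qM u₁ u₂ u₃ u₄ u₅ u₆ z - qN u₁ u₂ u₃ u₄ u₅ u₆ z =
      -(z*(qA u₁ u₂ u₃ u₄ u₅ u₆ * z^2 * (u₁*u₂*u₃*u₄*u₅*u₆)
        + z*(qB u₁ u₂ u₃ u₄ u₅ u₆ * (u₁*u₂*u₃*u₄*u₅*u₆))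
        + qC u₁ u₂ u₃ u₄ u₅ u₆ * (u₁*u₂*u₃*u₄*u₅*u₆))) := by
    rw [hUB, hUC]; unfold qA qM qN; ring
  have hMN : qM u₁ u₂ u₃ u₄ u₅ u₆ z = qN u₁ u₂ u₃ u₄ u₅ u₆ z := by
    linear_combination key + (-(z*(u₁*u₂*u₃*u₄*u₅*u₆))) * hquad
  set P : ℂ := z*((1 - z*u₁*u₂*u₄*u₅)*(1 - z*u₁*u₃*u₄*u₆)*(1 - z*u₂*u₃*u₅*u₆))
      + z*u₁*u₂*u₄*u₅*((1 - z)*(1 - z*u₁*u₃*u₄*u₆)*(1 - z*u₂*u₃*u₅*u₆))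
      + z*u₁*u₃*u₄*u₆*((1 - z)*(1 - z*u₁*u₂*u₄*u₅)*(1 - z*u₂*u₃*u₅*u₆))
      + z*u₂*u₃*u₅*u₆*((1 - z)*(1 - z*u₁*u₂*u₄*u₅)*(1 - z*u₁*u₃*u₄*u₆)) with hPdef
  set Q : ℂ := z*u₁*u₂*u₃*((1 - z*u₁*u₅*u₆)*(1 - z*u₂*u₄*u₆)*(1 - z*u₃*u₄*u₅))
      + z*u₁*u₅*u₆*((1 - z*u₁*u₂*u₃)*(1 - z*u₂*u₄*u₆)*(1 - z*u₃*u₄*u₅))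
      + z*u₂*u₄*u₆*((1 - z*u₁*u₂*u₃)*(1 - z*u₁*u₅*u₆)*(1 - z*u₃*u₄*u₅))
      + z*u₃*u₄*u₅*((1 - z*u₁*u₂*u₃)*(1 - z*u₁*u₅*u₆)*(1 - z*u₂*u₄*u₆)) with hQdef
  set SM : ℂ := z / (1 - z) + z*u₁*u₂*u₄*u₅ / (1 - z*u₁*u₂*u₄*u₅)
      + z*u₁*u₃*u₄*u₆ / (1 - z*u₁*u₃*u₄*u₆) + z*u₂*u₃*u₅*u₆ / (1 - z*u₂*u₃*u₅*u₆) with hSMdef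
  set SN : ℂ := z*u₁*u₂*u₃ / (1 - z*u₁*u₂*u₃) + z*u₁*u₅*u₆ / (1 - z*u₁*u₅*u₆)
      + z*u₂*u₄*u₆ / (1 - z*u₂*u₄*u₆) + z*u₃*u₄*u₅ / (1 - z*u₃*u₄*u₅) with hSNdef
  have hSdef : qS u₁ u₂ u₃ u₄ u₅ u₆ z = SM - SN := by
    rw [hSMdef, hSNdef]; unfold qS; ring
  have hSM : SM * qM u₁ u₂ u₃ u₄ u₅ u₆ z = P := by
    rw [hSMdef, hPdef]; unfold qM
    linear_combination (z*((1 - z*u₁*u₂*u₄*u₅)*(1 - z*u₁*u₃*u₄*u₆)*(1 - z*u₂*u₃*u₅*u₆))) * mul_inv_cancel₀ hm1'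
      + (z*u₁*u₂*u₄*u₅*((1 - z)*(1 - z*u₁*u₃*u₄*u₆)*(1 - z*u₂*u₃*u₅*u₆))) * mul_inv_cancel₀ hm2
      + (z*u₁*u₃*u₄*u₆*((1 - z)*(1 - z*u₁*u₂*u₄*u₅)*(1 - z*u₂*u₃*u₅*u₆))) * mul_inv_cancel₀ hm3
      + (z*u₂*u₃*u₅*u₆*((1 - z)*(1 - z*u₁*u₂*u₄*u₅)*(1 - z*u₁*u₃*u₄*u₆))) * mul_inv_cancel₀ hm4
  have hSN : SN * qN u₁ u₂ u₃ u₄ u₅ u₆ z = Q := by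
    rw [hSNdef, hQdef]; unfold qN
    linear_combination (z*u₁*u₂*u₃*((1 - z*u₁*u₅*u₆)*(1 - z*u₂*u₄*u₆)*(1 - z*u₃*u₄*u₅))) * mul_inv_cancel₀ hm5
      + (z*u₁*u₅*u₆*((1 - z*u₁*u₂*u₃)*(1 - z*u₂*u₄*u₆)*(1 - z*u₃*u₄*u₅))) * mul_inv_cancel₀ hm6
      + (z*u₂*u₄*u₆*((1 - z*u₁*u₂*u₃)*(1 - z*u₁*u₅*u₆)*(1 - z*u₃*u₄*u₅))) * mul_inv_cancel₀ hm7
      + (z*u₃*u₄*u₅*((1 - z*u₁*u₂*u₃)*(1 - z*u₁*u₅*u₆)*(1 - z*u₂*u₄*u₆))) * mul_inv_cancel₀ hm8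
  have hNS : qN u₁ u₂ u₃ u₄ u₅ u₆ z * qS u₁ u₂ u₃ u₄ u₅ u₆ z = P - Q := by
    rw [← hSM, ← hSN]
    linear_combination qN u₁ u₂ u₃ u₄ u₅ u₆ z * hSdef - SM * hMN
  have hPQ : P - Q = z*(3 * qA u₁ u₂ u₃ u₄ u₅ u₆ * z^2 * (u₁*u₂*u₃*u₄*u₅*u₆)
      + 2*z*(qB u₁ u₂ u₃ u₄ u₅ u₆ * (u₁*u₂*u₃*u₄*u₅*u₆))
      + qC u₁ u₂ u₃ u₄ u₅ u₆ * (u₁*u₂*u₃*u₄*u₅*u₆)) := by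
    rw [hUB, hUC, hPdef, hQdef]; unfold qA; ring
  have hfin : qN u₁ u₂ u₃ u₄ u₅ u₆ z * qS u₁ u₂ u₃ u₄ u₅ u₆ z =
      z * (u₁*u₂*u₃*u₄*u₅*u₆) * (qA u₁ u₂ u₃ u₄ u₅ u₆ * z^2 - qC u₁ u₂ u₃ u₄ u₅ u₆) := by
    linear_combination hNS + hPQ + 2*z*(u₁*u₂*u₃*u₄*u₅*u₆)*hquad
  rw [hfin, div_pow, div_eq_iff (pow_ne_zero 2 (mul_ne_zero (pow_ne_zero 2 hz) hU))]
  linear_combination ((qA u₁ u₂ u₃ u₄ u₅ u₆ * z^2 - qB u₁ u₂ u₃ u₄ u₅ u₆ * z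
    + qC u₁ u₂ u₃ u₄ u₅ u₆) * z^2 * (u₁*u₂*u₃*u₄*u₅*u₆)^2) * hquad
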